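/- arXiv:2304.03964 — 4 statements merged into one kernel-verified Lean document; each statement's English description precedes it below -/
import Mathlib

section
/- Let G be a group acting linearly on a vector space V of finite dimension n over a field, such that every σ ∈ G fixes pointwise a subspace of dimension at least n−1. Then either the invariant subspace V^G has dimension at least n−1, or the coinvariant quotient V_G has dimension at least n−1. -/
theorem stmt_2 (k : Type*) [Field k] (V : Type*) [AddCommGroup V] [Module k V]
    [FiniteDimensional k V] (n : ℕ) (hn : Module.finrank k V = n)
    (G : Type*) [Group G] (ρ : G →* (V ≃ₗ[k] V))
    (h : ∀ σ : G, n - 1 ≤ Module.finrank k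
          ↥(LinearMap.ker ((ρ σ : V →ₗ[k] V) - LinearMap.id))) :
    n - 1 ≤ Module.finrank k
        ↥(⨅ σ : G, LinearMap.ker ((ρ σ : V →ₗ[k] V) - LinearMap.id)) ∨
      n - 1 ≤ Module.finrank k
        (V ⧸ ⨆ σ : G, LinearMap.range ((ρ σ : V →ₗ[k] V) - LinearMap.id)) := by
  by_cases hn2 : 2 ≤ n
  swap
  · left
    have : n - 1 = 0 := by
      rcases Nat.lt_or_ge n 2 with h' | h'
      · omega
      · exact absurd h' hn2
    rw [this]; exact Nat.zero_le _
  -- notation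
  set F : G → (V →ₗ[k] V) := fun σ => ((ρ σ : V →ₗ[k] V) - LinearMap.id) with hFdef
  have hFapp : ∀ σ v, F σ v = ρ σ v - v := by
    intro σ v; simp [hFdef, LinearMap.sub_apply]
  have hK : ∀ σ, n - 1 ≤ Module.finrank k (LinearMap.ker (F σ)) := h
  have hR : ∀ σ, Module.finrank k (LinearMap.range (F σ)) ≤ 1 := by
    intro σ
    have := LinearMap.finrank_range_add_finrank_ker (F σ)
    rw [hn] at this
    have := hK σ
    omega
  -- kernels have finrank exactly n-1 when nontrivial
  have hKeq : ∀ σ, LinearMap.range (F σ) ≠ ⊥ →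
      Module.finrank k (LinearMap.ker (F σ)) = n - 1 := by
    intro σ hσ
    have h1 : LinearMap.ker (F σ) ≠ ⊤ := by
      intro ht
      exact hσ (LinearMap.range_eq_bot.mpr (LinearMap.ker_eq_top.mp ht))
    have h2 : Module.finrank k (LinearMap.ker (F σ)) ≤ n := hn ▸ Submodule.finrank_le _
    have h3 : Module.finrank k (LinearMap.ker (F σ)) ≠ n := by
      intro he
      exact h1 (Submodule.eq_top_of_finrank_eq (he.trans hn.symm))
    have := hK σ
    omega
  -- key lemma
  have key : ∀ σ τ : G, LinearMap.range (F σ) ≠ ⊥ → LinearMap.range (F τ) ≠ ⊥ →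
      LinearMap.range (F σ) ≠ LinearMap.range (F τ) →
      LinearMap.ker (F σ) = LinearMap.ker (F τ) := by
    intro σ τ hσ hτ hRne
    by_contra hKne
    -- ranges intersect trivially
    have hinf : LinearMap.range (F σ) ⊓ LinearMap.range (F τ) = ⊥ := by
      by_contra hib
      have h1 : 1 ≤ Module.finrank k ↥(LinearMap.range (F σ) ⊓ LinearMap.range (F τ)) := by
        have hne : Module.finrank k ↥(LinearMap.range (F σ) ⊓ LinearMap.range (F τ)) ≠ 0 :=
          fun hz => hib (Submodule.finrank_eq_zero.mp hz)
        omega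
      have e1 : LinearMap.range (F σ) ⊓ LinearMap.range (F τ) = LinearMap.range (F σ) :=
        Submodule.eq_of_le_of_finrank_le inf_le_left (le_trans (hR σ) h1)
      have e2 : LinearMap.range (F σ) ⊓ LinearMap.range (F τ) = LinearMap.range (F τ) :=
        Submodule.eq_of_le_of_finrank_le inf_le_right (le_trans (hR τ) h1)
      exact hRne (e1 ▸ e2)
    -- ker (σ*τ) ≤ ker σ ⊓ ker τ
    have hker : LinearMap.ker (F (σ * τ)) ≤ LinearMap.ker (F σ) ⊓ LinearMap.ker (F τ) := by
      intro v hv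
      have hv0 : ρ (σ * τ) v = v := by
        have h0 := LinearMap.mem_ker.mp hv
        rw [hFapp] at h0
        exact sub_eq_zero.mp h0
      have hv' : ρ σ (ρ τ v) = v := by
        rw [map_mul] at hv0
        exact hv0
      set x := ρ τ v - v with hx
      have hxτ : x ∈ LinearMap.range (F τ) := ⟨v, by rw [hFapp]⟩
      have hxσ : x ∈ LinearMap.range (F σ) := by
        refine ⟨-(ρ τ v), ?_⟩
        rw [hFapp, map_neg, hv', hx]
        abel
      have hx0 : x = 0 := by
        have : x ∈ (⊥ : Submodule k V) := hinf ▸ Submodule.mem_inf.mpr ⟨hxσ, hxτ⟩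
        simpa using this
      have hτv : ρ τ v = v := by
        have := hx0; rw [hx] at this; linear_combination (norm := abel) this
      refine Submodule.mem_inf.mpr ⟨?_, ?_⟩
      · rw [hτv] at hv'
        rw [LinearMap.mem_ker, hFapp, hv', sub_self]
      · rw [LinearMap.mem_ker, hFapp, hτv, sub_self]
    -- dimension count
    have fσ := hKeq σ hσ
    have fτ := hKeq τ hτ
    have hsup : n ≤ Module.finrank k ↥(LinearMap.ker (F σ) ⊔ LinearMap.ker (F τ)) := by
      by_contra hs
      push_neg at hs
      have hs' : Module.finrank k ↥(LinearMap.ker (F σ) ⊔ LinearMap.ker (F τ)) ≤ n - 1 := by omega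
      have e1 : LinearMap.ker (F σ) = LinearMap.ker (F σ) ⊔ LinearMap.ker (F τ) :=
        Submodule.eq_of_le_of_finrank_le le_sup_left (by omega)
      have e2 : LinearMap.ker (F τ) = LinearMap.ker (F σ) ⊔ LinearMap.ker (F τ) :=
        Submodule.eq_of_le_of_finrank_le le_sup_right (by omega)
      exact hKne (e1.trans e2.symm)
    have hsup' : Module.finrank k ↥(LinearMap.ker (F σ) ⊔ LinearMap.ker (F τ)) ≤ n :=
      hn ▸ Submodule.finrank_le _
    have hdim := Submodule.finrank_sup_add_finrank_inf_eq (LinearMap.ker (F σ)) (LinearMap.ker (F τ))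
    have hmono := Submodule.finrank_mono (R := k) (M := V) hker
    have := hK (σ * τ)
    omega
  -- assembly
  by_cases hall : ∀ σ τ : G, LinearMap.range (F σ) ≠ ⊥ → LinearMap.range (F τ) ≠ ⊥ →
      LinearMap.range (F σ) = LinearMap.range (F τ)
  · right
    show n - 1 ≤ Module.finrank k (V ⧸ ⨆ σ : G, LinearMap.range (F σ))
    have hsuple : ∃ L : Submodule k V, Module.finrank k L ≤ 1 ∧
        (⨆ σ : G, LinearMap.range (F σ)) ≤ L := by
      by_cases hex : ∃ σ₀ : G, LinearMap.range (F σ₀) ≠ ⊥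
      · obtain ⟨σ₀, hσ₀⟩ := hex
        refine ⟨LinearMap.range (F σ₀), hR σ₀, iSup_le fun τ => ?_⟩
        by_cases hτ : LinearMap.range (F τ) = ⊥
        · rw [hτ]; exact bot_le
        · exact le_of_eq (hall τ σ₀ hτ hσ₀)
      · push_neg at hex
        exact ⟨⊥, by simp, iSup_le fun τ => le_of_eq (hex τ)⟩
    obtain ⟨L, hL1, hLle⟩ := hsuple
    have h1 : Module.finrank k ↥(⨆ σ : G, LinearMap.range (F σ)) ≤ 1 :=
      le_trans (Submodule.finrank_mono hLle) hL1
    have hq := Submodule.finrank_quotient_add_finrank (⨆ σ : G, LinearMap.range (F σ))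
    rw [hn] at hq
    omega
  · left
    show n - 1 ≤ Module.finrank k ↥(⨅ σ : G, LinearMap.ker (F σ))
    push_neg at hall
    obtain ⟨σ, τ, hσ, hτ, hst⟩ := hall
    have hH : ∀ π : G, LinearMap.ker (F σ) ≤ LinearMap.ker (F π) := by
      intro π
      by_cases hπ : LinearMap.range (F π) = ⊥
      · rw [LinearMap.ker_eq_top.mpr (LinearMap.range_eq_bot.mp hπ)]; exact le_top
      · by_cases hps : LinearMap.range (F π) = LinearMap.range (F σ)
        · have : LinearMap.range (F π) ≠ LinearMap.range (F τ) := by rw [hps]; exact hst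
          rw [key σ τ hσ hτ hst]
          exact le_of_eq (key τ π hτ hπ (Ne.symm this))
        · exact le_of_eq (key σ π hσ hπ (Ne.symm hps))
    have hle : LinearMap.ker (F σ) ≤ ⨅ π : G, LinearMap.ker (F π) := le_iInf hH
    calc n - 1 ≤ Module.finrank k (LinearMap.ker (F σ)) := hK σ
      _ ≤ _ := Submodule.finrank_mono hle
end

section
/- Let G be a group acting linearly on a vector space V of finite dimension n. If there exist σ, τ ∈ G with 1-dimensional images (σ−1)V ≠ (τ−1)V, an element s fixed by σ but not by τ, and an element t fixed by τ but not by σ, then a contradiction follows; more precisely, (τσ−1)V = (τ−1)V while τ(σ−1)t lies in (τσ−1)V but (σ−1)t does not lie in (τ−1)V and τ translates it along (τ−1)V, which is impossible. -/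
theorem stmt_3 (k : Type*) [Field k] (V : Type*) [AddCommGroup V] [Module k V]
    [FiniteDimensional k V] (n : ℕ) (hn : Module.finrank k V = n)
    (G : Type*) [Group G] (ρ : G →* (V ≃ₗ[k] V))
    (hall : ∀ g : G, n - 1 ≤ Module.finrank k
          ↥(LinearMap.ker ((ρ g : V →ₗ[k] V) - LinearMap.id)))
    (σ τ : G)
    (hσ : Module.finrank k ↥(LinearMap.range ((ρ σ : V →ₗ[k] V) - LinearMap.id)) = 1)
    (hτ : Module.finrank k ↥(LinearMap.range ((ρ τ : V →ₗ[k] V) - LinearMap.id)) = 1)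
    (hne : LinearMap.range ((ρ σ : V →ₗ[k] V) - LinearMap.id) ≠
           LinearMap.range ((ρ τ : V →ₗ[k] V) - LinearMap.id))
    (s : V) (hs : ρ σ s = s) (hs' : ρ τ s ≠ s)
    (t : V) (ht : ρ τ t = t) (ht' : ρ σ t ≠ t) :
    False := by
  classical
  -- every (ρ g - 1) has range of dimension ≤ 1
  have hrank : ∀ g : G,
      Module.finrank k ↥(LinearMap.range ((ρ g : V →ₗ[k] V) - LinearMap.id)) ≤ 1 := by
    intro g
    have h1 := LinearMap.finrank_range_add_finrank_ker ((ρ g : V →ₗ[k] V) - LinearMap.id)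
    rw [hn] at h1
    have h2 := hall g
    omega
  have key : ∀ (W : Submodule k V) (x : V), x ∈ W → x ≠ 0 →
      Module.finrank k W ≤ 1 → W = Submodule.span k {x} := by
    intro W x hxW hx hW
    refine (Submodule.eq_of_le_of_finrank_le
      ((Submodule.span_singleton_le_iff_mem x W).mpr hxW) ?_).symm
    rw [finrank_span_singleton hx]
    exact hW
  set A := LinearMap.range ((ρ σ : V →ₗ[k] V) - LinearMap.id) with hA
  set B := LinearMap.range ((ρ τ : V →ₗ[k] V) - LinearMap.id) with hB
  set C := LinearMap.range ((ρ (τ * σ) : V →ₗ[k] V) - LinearMap.id) with hC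
  set u := ρ σ t - t with hu
  set w := ρ τ s - s with hw
  have hu0 : u ≠ 0 := sub_ne_zero.mpr ht'
  have hw0 : w ≠ 0 := sub_ne_zero.mpr hs'
  have huA : u ∈ A := ⟨t, by simp [hu]⟩
  have hwB : w ∈ B := ⟨s, by simp [hw]⟩
  have hAu : A = Submodule.span k {u} := key A u huA hu0 hσ.le
  have hBw : B = Submodule.span k {w} := key B w hwB hw0 hτ.le
  -- (τσ - 1) s = w
  have hwC : w ∈ C := ⟨s, by simp [hw, map_mul, hs]⟩
  have hCw : C = Submodule.span k {w} := key C w hwC hw0 (hrank (τ * σ))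
  have hCB : C = B := hCw.trans hBw.symm
  -- ρ τ u = (τσ - 1) t ∈ C = B
  have hτuC : ρ τ u ∈ C := by
    refine ⟨t, ?_⟩
    show (ρ (τ * σ)) t - t = ρ τ u
    rw [map_mul, hu, map_sub, ht]
    rfl
  have hτuB : ρ τ u ∈ B := hCB ▸ hτuC
  have hsubB : ρ τ u - u ∈ B := ⟨u, by simp⟩
  have huB : u ∈ B := by
    have := B.sub_mem hτuB hsubB
    simpa using this
  have hAB : A = B := by
    refine Submodule.eq_of_le_of_finrank_le ?_ (by rw [hσ, hτ])
    rw [hAu]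
    exact (Submodule.span_singleton_le_iff_mem u B).mpr huB
  exact hne hAB
end

section
/- Let a, b ∈ K (field of characteristic 0) and λ ∈ K with λ² ≠ b and 2λ ≠ a. Set D = (a − 2λ)/(λ² − b) and Y = (λ² − aλ + b)/(λ² − b). Then Y² = 1 + aD + bD², i.e., the point (1, Y) lies on the quadratic twist E_D : y² = x(x² + aDx + bD²) of y² = x(x²+ax+b). -/
theorem stmt_11 (K : Type*) [Field K] [CharZero K] (a b lam : K)
    (h1 : lam ^ 2 ≠ b) (h2 : 2 * lam ≠ a) :
    ((lam ^ 2 - a * lam + b) / (lam ^ 2 - b)) ^ 2 =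
      1 + a * ((a - 2 * lam) / (lam ^ 2 - b)) +
        b * ((a - 2 * lam) / (lam ^ 2 - b)) ^ 2 := by
  have h : lam ^ 2 - b ≠ 0 := sub_ne_zero.mpr h1
  field_simp
  ring
end

section
/- Let A be a finite abelian group and P ∈ A. Suppose a prime ℓ divides the index [A : ⟨P⟩]. Then either A contains a subgroup isomorphic to Z/ℓZ × Z/ℓZ, or there exists Q ∈ A with ℓQ = P and A has an element of order ℓ. -/
theorem stmt_19 (A : Type*) [AddCommGroup A] [Fintype A] (P : A) (ℓ : ℕ)
    (hℓ : ℓ.Prime) (hdvd : ℓ ∣ (AddSubgroup.zmultiples P).index) :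
    (∃ φ : (ZMod ℓ × ZMod ℓ) →+ A, Function.Injective φ) ∨
      ((∃ Q : A, ℓ • Q = P) ∧ ∃ a : A, addOrderOf a = ℓ) := by
  classical
  haveI : Fact ℓ.Prime := ⟨hℓ⟩
  haveI : NeZero ℓ := ⟨hℓ.ne_zero⟩
  set f : A →+ A := AddMonoidHom.mk' (fun x => ℓ • x) (fun a b => smul_add ℓ a b) with hf
  by_cases hQ : ∃ Q : A, ℓ • Q = P
  · right
    refine ⟨hQ, ?_⟩
    have h1 : ℓ ∣ Fintype.card A := by
      have h2 := (AddSubgroup.zmultiples P).index_dvd_card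
      rw [Nat.card_eq_fintype_card] at h2
      exact hdvd.trans h2
    exact exists_prime_addOrderOf_dvd_card ℓ h1
  left
  by_cases hbig : ℓ < Nat.card f.ker
  · -- ker f is a ZMod ℓ vector space of dimension ≥ 2
    haveI : Module (ZMod ℓ) f.ker := AddCommGroup.zmodModule (n := ℓ) (by
      rintro ⟨x, hx⟩
      ext
      rw [AddMonoidHom.mem_ker] at hx
      simpa [f] using hx)
    have hcard : Fintype.card f.ker = ℓ ^ Module.finrank (ZMod ℓ) f.ker := by
      rw [Module.card_eq_pow_finrank (K := ZMod ℓ) (V := f.ker), ZMod.card]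
    have hd : 1 < Module.finrank (ZMod ℓ) f.ker := by
      by_contra h
      push_neg at h
      have h2 : ℓ ^ Module.finrank (ZMod ℓ) f.ker ≤ ℓ ^ 1 :=
        Nat.pow_le_pow_right hℓ.pos h
      rw [Nat.card_eq_fintype_card, hcard] at hbig
      rw [pow_one] at h2
      omega
    let b := Module.Free.chooseBasis (ZMod ℓ) f.ker
    have hι : 1 < Fintype.card (Module.Free.ChooseBasisIndex (ZMod ℓ) f.ker) := by
      rwa [← Module.finrank_eq_card_chooseBasisIndex]
    obtain ⟨i, j, hij⟩ := Fintype.exists_pair_of_one_lt_card hι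
    set L : (ZMod ℓ × ZMod ℓ) →ₗ[ZMod ℓ] f.ker :=
      (LinearMap.toSpanSingleton (ZMod ℓ) f.ker (b i)).coprod
        (LinearMap.toSpanSingleton (ZMod ℓ) f.ker (b j)) with hL
    have hLinj : Function.Injective L := by
      rw [← LinearMap.ker_eq_bot]
      rw [eq_bot_iff]
      rintro ⟨x, y⟩ hxy
      rw [LinearMap.mem_ker] at hxy
      have hxy' : x • b i + y • b j = 0 := by simpa [hL, LinearMap.toSpanSingleton] using hxy
      have hx : x = 0 := by
        have := congrArg (fun v => b.repr v i) hxy'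
        simpa [Finsupp.single_apply, hij, Ne.symm hij] using this
      have hy : y = 0 := by
        have := congrArg (fun v => b.repr v j) hxy'
        simpa [Finsupp.single_apply, hij, Ne.symm hij] using this
      simp [hx, hy, Prod.ext_iff]
    exact ⟨f.ker.subtype.comp L.toAddMonoidHom,
      (AddSubgroup.subtype_injective f.ker).comp hLinj⟩
  · exfalso
    push_neg at hbig
    -- the decreasing chain T k = (map f)^[k] ⊤
    have hfmem : ∀ (H : AddSubgroup A), AddSubgroup.map f H ≤ H := by
      intro H x hx
      obtain ⟨y, hy, rfl⟩ := hx
      exact H.nsmul_mem hy ℓ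
    set T : ℕ → AddSubgroup A := fun k => (fun H => AddSubgroup.map f H)^[k] ⊤ with hT
    have hT0 : T 0 = ⊤ := rfl
    have hTsucc : ∀ k, T (k + 1) = AddSubgroup.map f (T k) := by
      intro k
      simp [hT, Function.iterate_succ_apply']
    have hT1 : T 1 = f.range := by
      rw [hTsucc 0, hT0, ← AddMonoidHom.range_eq_map]
    -- card of quotient by range
    have hquot : f.ker.index = Nat.card f.range := by
      rw [AddSubgroup.index_eq_card]
      exact Nat.card_congr (QuotientAddGroup.quotientKerEquivRange f).toEquiv
    have hcardA2 : Nat.card f.ker * Nat.card f.range = Nat.card A := by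
      rw [← hquot]
      exact f.ker.card_mul_index
    have hidx : f.range.index = Nat.card f.ker := by
      have h3 := f.range.card_mul_index
      have hpos : 0 < Nat.card f.range := Nat.card_pos
      nlinarith [h3, hcardA2]
    -- base: ⟨P⟩ ⊔ range f = ⊤
    have hbase : AddSubgroup.zmultiples P ⊔ T 1 = ⊤ := by
      rw [hT1]
      have hPn : P ∉ f.range := by
        rintro ⟨Q, hQ'⟩
        exact hQ ⟨Q, hQ'⟩
      have hkP : (P : A ⧸ f.range) ≠ 0 := by
        rw [Ne, QuotientAddGroup.eq_zero_iff]
        exact hPn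
      have hord : addOrderOf (P : A ⧸ f.range) = ℓ := by
        have h1 : ℓ • (P : A ⧸ f.range) = 0 := by
          rw [← QuotientAddGroup.mk_nsmul, QuotientAddGroup.eq_zero_iff]
          exact ⟨P, rfl⟩
        rcases hℓ.eq_one_or_self_of_dvd _ (addOrderOf_dvd_of_nsmul_eq_zero h1) with h | h
        · exact absurd (AddMonoid.addOrderOf_eq_one_iff.mp h) hkP
        · exact h
      have hcQ : Nat.card (A ⧸ f.range) = ℓ := by
        have hle : Nat.card (A ⧸ f.range) ≤ ℓ := by
          rw [← AddSubgroup.index_eq_card, hidx]; exact hbig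
        have hge : ℓ ∣ Nat.card (A ⧸ f.range) := hord ▸ addOrderOf_dvd_natCard _
        exact le_antisymm hle (Nat.le_of_dvd Nat.card_pos hge)
      have htopQ : AddSubgroup.zmultiples (P : A ⧸ f.range) = ⊤ :=
        AddSubgroup.eq_top_of_card_eq _ (by rw [Nat.card_zmultiples, hord, hcQ])
      rw [AddSubgroup.eq_top_iff']
      intro a
      have hmem : (a : A ⧸ f.range) ∈ AddSubgroup.zmultiples (P : A ⧸ f.range) := by
        rw [htopQ]; trivial
      obtain ⟨k, hk⟩ := AddSubgroup.mem_zmultiples_iff.mp hmem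
      rw [AddSubgroup.mem_sup]
      refine ⟨k • P, AddSubgroup.zsmul_mem _ (AddSubgroup.mem_zmultiples P) k,
        a - k • P, ?_, by abel⟩
      rw [← QuotientAddGroup.eq_zero_iff]
      push_cast [QuotientAddGroup.mk_sub, QuotientAddGroup.mk_zsmul]
      rw [hk]
      simp
    -- all levels
    have htop : ∀ k, AddSubgroup.zmultiples P ⊔ T k = ⊤ := by
      intro k
      induction k with
      | zero => simp [hT0]
      | succ k ih =>
        have h1 : T 1 ≤ AddSubgroup.zmultiples P ⊔ T (k + 1) := by
          have h2 : T 1 = AddSubgroup.map f (AddSubgroup.zmultiples P ⊔ T k) := by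
            rw [ih, hTsucc 0, hT0]
          rw [h2, AddSubgroup.map_sup, ← hTsucc k]
          exact sup_le ((hfmem _).trans le_sup_left) le_sup_right
        rw [eq_top_iff, ← hbase]
        exact sup_le le_sup_left h1
    -- fixed point
    have hfixex : ∃ k, T (k + 1) = T k := by
      by_contra h
      push_neg at h
      have hmono : ∀ k, Nat.card (T (k + 1)) < Nat.card (T k) := by
        intro k
        have hlt' : ((T (k + 1) : AddSubgroup A) : Set A) ⊂ (T k : Set A) := by
          rw [SetLike.coe_ssubset_coe]
          exact lt_of_le_of_ne (by rw [hTsucc]; exact hfmem _) (h k)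
        have h4 := Set.ncard_lt_ncard hlt' (Set.toFinite _)
        rw [← Nat.card_coe_set_eq, ← Nat.card_coe_set_eq] at h4
        exact h4
      have hbound : ∀ k, Nat.card (T k) + k ≤ Nat.card (T 0) := by
        intro k
        induction k with
        | zero => simp
        | succ k ih =>
          have := hmono k
          omega
      have := hbound (Nat.card (T 0) + 1)
      omega
    obtain ⟨k, hfix⟩ := hfixex
    rw [hTsucc] at hfix
    set S := T k with hS
    -- multiplication by ℓ is bijective on S, so ℓ ∤ |S|
    have hno : ¬ ℓ ∣ Nat.card S := by
      intro hdvd'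
      rw [Nat.card_eq_fintype_card] at hdvd'
      obtain ⟨a, ha⟩ := exists_prime_addOrderOf_dvd_card (G := S) ℓ hdvd'
      have hg : Function.Surjective
          (fun x : S => (⟨f x, hfmem S ⟨x, x.2, rfl⟩⟩ : S)) := by
        rintro ⟨y, hy⟩
        rw [← hfix] at hy
        obtain ⟨x, hx, hfx⟩ := hy
        exact ⟨⟨x, hx⟩, Subtype.ext hfx⟩
      have hginj := Finite.injective_iff_surjective.mpr hg
      have h0 : ℓ • a = 0 := by rw [← ha]; exact addOrderOf_nsmul_eq_zero a
      have ha0 : a = 0 := by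
        apply hginj
        apply Subtype.ext
        show f (a : A) = f ((0 : S) : A)
        have : f (a : A) = ((ℓ • a : S) : A) := by simp [f]
        rw [this, h0]
        simp [f]
      rw [ha0, addOrderOf_zero] at ha
      exact hℓ.ne_one ha.symm
    apply hno
    refine hdvd.trans ?_
    rw [AddSubgroup.index_eq_card]
    apply AddSubgroup.card_dvd_of_surjective
      ((QuotientAddGroup.mk' (AddSubgroup.zmultiples P)).comp S.subtype)
    intro q
    induction q using QuotientAddGroup.induction_on with
    | H a =>
      obtain ⟨y, hy, z, hz, hyz⟩ := AddSubgroup.mem_sup.mp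
        ((htop k).symm ▸ AddSubgroup.mem_top a)
      refine ⟨⟨z, hz⟩, ?_⟩
      show ((z : A) : A ⧸ AddSubgroup.zmultiples P) = a
      rw [← hyz, QuotientAddGroup.mk_add]
      rw [(QuotientAddGroup.eq_zero_iff y).mpr hy, zero_add]
end
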